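/- For the boundary function g(m,k) = m^{1/2}(1+k/m)(k/(k+m))^γ with 0 ≤ γ < 1/2 and any fixed ξ < 1/2, one has lim_{m→∞} sup_{k ≥ 1} k m^{ξ-1} / g(m,k) = 0. -/

import Mathlib

open Filter

lemma key_term_bound (γ ξ : ℝ) (hγ0 : 0 ≤ γ) (hγ1 : γ ≤ 1)
    (m k : ℕ) (hm : 1 ≤ m) (hk : 1 ≤ k) :
    ((k : ℝ) * (m : ℝ) ^ (ξ - 1)) /
      (Real.sqrt m * (1 + (k : ℝ) / m) * ((k : ℝ) / ((k : ℝ) + m)) ^ γ)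
      ≤ (m : ℝ) ^ (ξ - 1/2) := by
  have hM : (0:ℝ) < m := by exact_mod_cast Nat.lt_of_lt_of_le Nat.zero_lt_one hm
  have hK : (0:ℝ) < k := by exact_mod_cast Nat.lt_of_lt_of_le Nat.zero_lt_one hk
  have hKM : (0:ℝ) < (k : ℝ) + m := by linarith
  have hx0 : (0:ℝ) < (k : ℝ) / ((k : ℝ) + m) := div_pos hK hKM
  have hx1 : (k : ℝ) / ((k : ℝ) + m) ≤ 1 := by
    rw [div_le_one hKM]; linarith
  have hD : 0 < Real.sqrt m * (1 + (k : ℝ) / m) * ((k : ℝ) / ((k : ℝ) + m)) ^ γ := by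
    have := Real.sqrt_pos.mpr hM
    have h2 : (0:ℝ) < 1 + (k:ℝ)/m := by positivity
    positivity
  rw [div_le_iff₀ hD]
  -- x ≤ x^γ for 0 < x ≤ 1, γ ≤ 1
  have hmono : (k : ℝ) / ((k : ℝ) + m) ≤ ((k : ℝ) / ((k : ℝ) + m)) ^ γ := by
    calc (k : ℝ) / ((k : ℝ) + m) = ((k : ℝ) / ((k : ℝ) + m)) ^ (1:ℝ) := (Real.rpow_one _).symm
    _ ≤ ((k : ℝ) / ((k : ℝ) + m)) ^ γ :=
        Real.rpow_le_rpow_of_exponent_ge hx0 hx1 hγ1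
  -- k ≤ (k+m) * x^γ
  have hk_le : (k : ℝ) ≤ ((k : ℝ) + m) * ((k : ℝ) / ((k : ℝ) + m)) ^ γ := by
    have := mul_le_mul_of_nonneg_left hmono (le_of_lt hKM)
    rw [mul_div_cancel₀ _ (ne_of_gt hKM)] at this
    exact this
  -- rewrite RHS
  have hsqrt : Real.sqrt m = (m : ℝ) ^ ((1:ℝ)/2) := Real.sqrt_eq_rpow _
  have h1pk : 1 + (k : ℝ) / m = ((k : ℝ) + m) / m := by field_simp; ring
  have hrpow : (m : ℝ) ^ (ξ - 1/2) * ((m : ℝ) ^ ((1:ℝ)/2) * (((k : ℝ) + m) / m))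
      = (m : ℝ) ^ (ξ - 1) * ((k : ℝ) + m) := by
    have h1 : (m : ℝ) ^ (ξ - 1/2) * (m : ℝ) ^ ((1:ℝ)/2) = (m : ℝ) ^ ξ := by
      rw [← Real.rpow_add hM]; ring_nf
    have h2 : (m : ℝ) ^ ξ / m = (m : ℝ) ^ (ξ - 1) := by
      rw [Real.rpow_sub hM, Real.rpow_one]
    calc (m : ℝ) ^ (ξ - 1/2) * ((m : ℝ) ^ ((1:ℝ)/2) * (((k : ℝ) + m) / m))
        = ((m : ℝ) ^ (ξ - 1/2) * (m : ℝ) ^ ((1:ℝ)/2)) / m * ((k : ℝ) + m) := by ring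
      _ = (m : ℝ) ^ (ξ - 1) * ((k : ℝ) + m) := by rw [h1, h2]
  have hMxi : (0:ℝ) < (m : ℝ) ^ (ξ - 1) := Real.rpow_pos_of_pos hM _
  calc (k : ℝ) * (m : ℝ) ^ (ξ - 1)
      ≤ (((k : ℝ) + m) * ((k : ℝ) / ((k : ℝ) + m)) ^ γ) * (m : ℝ) ^ (ξ - 1) :=
        mul_le_mul_of_nonneg_right hk_le (le_of_lt hMxi)
    _ = (m : ℝ) ^ (ξ - 1/2) * (Real.sqrt m * (1 + (k : ℝ) / m) * ((k : ℝ) / ((k : ℝ) + m)) ^ γ) := by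
        rw [hsqrt, h1pk]
        rw [show (m : ℝ) ^ (ξ - 1/2) * ((m:ℝ) ^ ((1:ℝ)/2) * (((k : ℝ) + m) / m) * ((k : ℝ) / ((k : ℝ) + m)) ^ γ)
            = ((m : ℝ) ^ (ξ - 1/2) * ((m:ℝ) ^ ((1:ℝ)/2) * (((k : ℝ) + m) / m))) * ((k : ℝ) / ((k : ℝ) + m)) ^ γ by ring]
        rw [hrpow]; ring

/-- For `g(m,k) = m^{1/2}(1+k/m)(k/(k+m))^γ` with `0 ≤ γ < 1/2` and
any fixed `ξ < 1/2`, one has `lim_{m→∞} sup_{k ≥ 1} k m^{ξ-1} / g(m,k) = 0`. -/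
theorem sup_k_mxi_div_g_tendsto_zero
    (γ ξ : ℝ) (hγ0 : 0 ≤ γ) (hγ : γ < 1/2) (hξ : ξ < 1/2) :
    Tendsto (fun m : ℕ =>
      ⨆ k : {k : ℕ // 1 ≤ k},
        ((k.1 : ℝ) * (m : ℝ) ^ (ξ - 1)) /
          (Real.sqrt m * (1 + (k.1 : ℝ) / m) * ((k.1 : ℝ) / ((k.1 : ℝ) + m)) ^ γ))
      atTop (nhds 0) := by
  have hγ1 : γ ≤ 1 := by linarith
  have htend : Tendsto (fun m : ℕ => (m : ℝ) ^ (ξ - 1/2)) atTop (nhds 0) := by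
    have h := (tendsto_rpow_neg_atTop (by linarith : (0:ℝ) < 1/2 - ξ)).comp
      tendsto_natCast_atTop_atTop (α := ℕ)
    simpa [Function.comp_def, neg_sub] using h
  apply squeeze_zero'
  · filter_upwards with m
    apply Real.iSup_nonneg
    intro k
    positivity
  · filter_upwards [eventually_ge_atTop 1] with m hm
    apply ciSup_le
    intro k
    exact key_term_bound γ ξ hγ0 hγ1 m k.1 hm k.2
  · exact htend
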